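/- Let G=(V,E) be a general dissimilarity graph and let S⊆E be a regular cover of all unbalanced cycles of G. Then G can be converted into a general metric graph by only changing weights of edges in S: there exists a nonnegative weight function w' on E with w'(e)=w(e) for every e∉S, such that in (G,w') the weight of every edge equals the shortest-path distance between its endpoints. -/

import Mathlib

open SimpleGraph

noncomputable section

variable {V : Type*}

/-- The length of a walk: the sum of the weights of its edges. -/
def wlen {G : SimpleGraph V} (w : Sym2 V → ℝ) {u v : V} (p : G.Walk u v) : ℝ :=
  (p.edges.map w).sum

/-- The shortest-path distance between two vertices: the minimum length of a path. -/
def spDist (G : SimpleGraph V) (w : Sym2 V → ℝ) (u v : V) : ℝ :=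
  sInf {x : ℝ | ∃ p : G.Walk u v, p.IsPath ∧ wlen w p = x}

/-- `(G, w)` is a general metric graph: the weight of every edge equals the
shortest-path distance between its endpoints. -/
def IsMetricGraph (G : SimpleGraph V) (w : Sym2 V → ℝ) : Prop :=
  ∀ u v : V, G.Adj u v → w s(u, v) = spDist G w u v

/-- `e` is a top edge of the closed walk `p`: it lies on `p` and its weight strictly
exceeds the sum of the weights of all the other edges of `p`. -/
def IsTopEdge {G : SimpleGraph V} (w : Sym2 V → ℝ) {v : V} (p : G.Walk v v)
    (e : Sym2 V) : Prop :=
  e ∈ p.edges ∧ (p.edges.map w).sum - w e < w e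

/-- A cycle is unbalanced if it has a top edge. -/
def IsUnbalanced {G : SimpleGraph V} (w : Sym2 V → ℝ) {v : V} (p : G.Walk v v) : Prop :=
  ∃ e, IsTopEdge w p e

/-- `S` is a regular cover of all unbalanced cycles of `G`:
it contains at least one edge of every unbalanced cycle. -/
def RegularCover (G : SimpleGraph V) (w : Sym2 V → ℝ) (S : Set (Sym2 V)) : Prop :=
  ∀ (v : V) (p : G.Walk v v), p.IsCycle → IsUnbalanced w p → ∃ e ∈ p.edges, e ∈ S

/-- `S` is a non-top cover of all unbalanced cycles of `G`:
it contains at least one non-top edge of every unbalanced cycle. -/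
def NonTopCover (G : SimpleGraph V) (w : Sym2 V → ℝ) (S : Set (Sym2 V)) : Prop :=
  ∀ (v : V) (p : G.Walk v v), p.IsCycle → IsUnbalanced w p →
    ∃ e ∈ p.edges, e ∈ S ∧ ¬ IsTopEdge w p e

section helpers

variable {G : SimpleGraph V}

lemma wlen_nil {w : Sym2 V → ℝ} {u : V} : wlen w (Walk.nil : G.Walk u u) = 0 := rfl

lemma wlen_cons {w : Sym2 V → ℝ} {u x v : V} (h : G.Adj u x) (p : G.Walk x v) :
    wlen w (Walk.cons h p) = w s(u, x) + wlen w p := by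
  simp [wlen]

lemma wlen_append {w : Sym2 V → ℝ} {u x v : V} (p : G.Walk u x) (q : G.Walk x v) :
    wlen w (p.append q) = wlen w p + wlen w q := by
  simp [wlen, Walk.edges_append]

lemma wlen_reverse {w : Sym2 V → ℝ} {u v : V} (p : G.Walk u v) :
    wlen w p.reverse = wlen w p := by
  simp [wlen, Walk.edges_reverse, List.sum_reverse]

lemma wlen_nonneg {w : Sym2 V → ℝ} (hw : ∀ e ∈ G.edgeSet, 0 ≤ w e) {u v : V}
    (p : G.Walk u v) : 0 ≤ wlen w p := by
  refine List.sum_nonneg ?_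
  rintro x hx
  obtain ⟨e, he, rfl⟩ := List.mem_map.mp hx
  exact hw e (p.edges_subset_edgeSet he)

lemma wlen_mono {w₁ w₂ : Sym2 V → ℝ} {u v : V} (p : G.Walk u v)
    (h : ∀ e ∈ p.edges, w₁ e ≤ w₂ e) : wlen w₁ p ≤ wlen w₂ p := by
  induction p with
  | nil => simp [wlen_nil]
  | @cons a b c ha q ih =>
      rw [wlen_cons, wlen_cons]
      have h1 : w₁ s(a, b) ≤ w₂ s(a, b) := h _ (by simp)
      have h2 : ∀ e ∈ q.edges, w₁ e ≤ w₂ e := fun e he => h e (by simp [he])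
      have := ih h2
      linarith

lemma sum_map_le_of_subset {α : Type*} [DecidableEq α] :
    ∀ (l' : List α), l'.Nodup → ∀ (l : List α), l' ⊆ l → ∀ (f : α → ℝ),
      (∀ a ∈ l, 0 ≤ f a) → (l'.map f).sum ≤ (l.map f).sum
  | [], _, l, _, f, hf => by
      simp only [List.map_nil, List.sum_nil]
      refine List.sum_nonneg ?_
      rintro x hx
      obtain ⟨e, he, rfl⟩ := List.mem_map.mp hx
      exact hf e he
  | a :: t, h', l, hsub, f, hf => by
      have ha : a ∈ l := hsub (List.mem_cons_self (a := a) (l := t))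
      have hperm : l.Perm (a :: l.erase a) := List.perm_cons_erase ha
      have hsum : (l.map f).sum = f a + ((l.erase a).map f).sum := by
        rw [(hperm.map f).sum_eq]; simp
      have ht : t ⊆ l.erase a := by
        intro b hb
        have hba : b ≠ a := by rintro rfl; exact (List.nodup_cons.mp h').1 hb
        exact (List.mem_erase_of_ne hba).mpr (hsub (List.mem_cons_of_mem _ hb))
      have hf' : ∀ b ∈ l.erase a, 0 ≤ f b := fun b hb => hf b (List.mem_of_mem_erase hb)
      have := sum_map_le_of_subset t (List.nodup_cons.mp h').2 (l.erase a) ht f hf'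
      simp only [List.map_cons, List.sum_cons, hsum]
      linarith

variable [Fintype V]

lemma spDist_set_finite (w : Sym2 V → ℝ) (u v : V) :
    {x : ℝ | ∃ p : G.Walk u v, p.IsPath ∧ wlen w p = x}.Finite := by
  classical
  haveI : DecidableEq V := Classical.decEq V
  haveI : DecidableRel G.Adj := Classical.decRel _
  have heq : {x : ℝ | ∃ p : G.Walk u v, p.IsPath ∧ wlen w p = x}
      = (fun p : G.Walk u v => wlen w p) '' {p | p.IsPath ∧ p.length < Fintype.card V} := by
    ext x
    constructor
    · rintro ⟨p, hp, rfl⟩; exact ⟨p, ⟨hp, hp.length_lt⟩, rfl⟩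
    · rintro ⟨p, ⟨hp, _⟩, rfl⟩; exact ⟨p, hp, rfl⟩
  rw [heq]
  exact (Set.toFinite _).image _

omit [Fintype V] in
lemma spDist_set_nonempty (hconn : G.Connected) (w : Sym2 V → ℝ) (u v : V) :
    {x : ℝ | ∃ p : G.Walk u v, p.IsPath ∧ wlen w p = x}.Nonempty := by
  classical
  obtain ⟨p⟩ := hconn.preconnected u v
  exact ⟨wlen w p.bypass, p.bypass, p.bypass_isPath, rfl⟩

lemma spDist_le {w : Sym2 V → ℝ} {u v : V} {p : G.Walk u v} (hp : p.IsPath) :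
    spDist G w u v ≤ wlen w p :=
  csInf_le (spDist_set_finite w u v).bddBelow ⟨p, hp, rfl⟩

omit [Fintype V] in
lemma le_spDist (hconn : G.Connected) {w : Sym2 V → ℝ} {u v : V} {c : ℝ}
    (h : ∀ p : G.Walk u v, p.IsPath → c ≤ wlen w p) : c ≤ spDist G w u v :=
  le_csInf (spDist_set_nonempty hconn w u v) (by rintro x ⟨p, hp, rfl⟩; exact h p hp)

lemma exists_spDist (hconn : G.Connected) (w : Sym2 V → ℝ) (u v : V) :
    ∃ p : G.Walk u v, p.IsPath ∧ wlen w p = spDist G w u v :=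
  (spDist_set_nonempty hconn w u v).csInf_mem (spDist_set_finite w u v)

lemma spDist_le_wlen {w : Sym2 V → ℝ} (hw : ∀ e ∈ G.edgeSet, 0 ≤ w e) {u v : V}
    (p : G.Walk u v) : spDist G w u v ≤ wlen w p := by
  classical
  refine le_trans (spDist_le p.bypass_isPath) ?_
  exact sum_map_le_of_subset _ p.bypass_isPath.edges_nodup _ p.edges_bypass_subset w
    (fun e he => hw e (p.edges_subset_edgeSet he))

omit [Fintype V] in
lemma spDist_nonneg (hconn : G.Connected) {w : Sym2 V → ℝ}
    (hw : ∀ e ∈ G.edgeSet, 0 ≤ w e) (u v : V) : 0 ≤ spDist G w u v :=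
  le_spDist hconn (fun p _ => wlen_nonneg hw p)

lemma spDist_triangle (hconn : G.Connected) {w : Sym2 V → ℝ}
    (hw : ∀ e ∈ G.edgeSet, 0 ≤ w e) (u x v : V) :
    spDist G w u v ≤ spDist G w u x + spDist G w x v := by
  obtain ⟨p, hp, hpl⟩ := exists_spDist (G := G) hconn w u x
  obtain ⟨q, hq, hql⟩ := exists_spDist (G := G) hconn w x v
  calc spDist G w u v ≤ wlen w (p.append q) := spDist_le_wlen hw _
    _ = spDist G w u x + spDist G w x v := by rw [wlen_append, hpl, hql]

omit [Fintype V] in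
lemma spDist_symm (w : Sym2 V → ℝ) (u v : V) : spDist G w u v = spDist G w v u := by
  unfold spDist
  congr 1
  ext x
  constructor <;> rintro ⟨p, hp, rfl⟩ <;> exact ⟨p.reverse, hp.reverse, wlen_reverse p⟩

end helpers

/-- If `S ⊆ E` is a regular cover of all unbalanced cycles of a general
dissimilarity graph `G`, then `G` can be converted into a general metric graph
by only changing (to nonnegative values) weights of edges in `S`. -/
theorem stmt3 [Fintype V] (G : SimpleGraph V) (hconn : G.Connected)
    (w : Sym2 V → ℝ) (hw : ∀ e ∈ G.edgeSet, 0 < w e)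
    (S : Set (Sym2 V)) (hSE : S ⊆ G.edgeSet) (hS : RegularCover G w S) :
    ∃ w' : Sym2 V → ℝ,
      (∀ e ∈ G.edgeSet, 0 ≤ w' e) ∧
      (∀ e ∈ G.edgeSet, e ∉ S → w' e = w e) ∧
      IsMetricGraph G w' := by
  classical
  set W : ℝ := 1 + ∑ e ∈ G.edgeSet.toFinite.toFinset, w e with hWdef
  have hsum_nonneg : 0 ≤ ∑ e ∈ G.edgeSet.toFinite.toFinset, w e :=
    Finset.sum_nonneg (fun e he => (hw e (by simpa using he)).le)
  have hWpos : 0 < W := by rw [hWdef]; linarith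
  have hWgt : ∀ e ∈ G.edgeSet, w e < W := by
    intro e he
    have h1 : w e ≤ ∑ f ∈ G.edgeSet.toFinite.toFinset, w f :=
      Finset.single_le_sum (f := w) (fun f hf => (hw f (by simpa using hf)).le)
        (by simpa using he)
    rw [hWdef]; linarith
  set wT : Sym2 V → ℝ := fun e => if e ∈ S then W else w e with hwT
  have hwTpos : ∀ e ∈ G.edgeSet, 0 < wT e := by
    intro e he
    by_cases hs : e ∈ S
    · simpa [hwT, hs] using hWpos
    · simpa [hwT, hs] using hw e he
  have hwTnn : ∀ e ∈ G.edgeSet, 0 ≤ wT e := fun e he => (hwTpos e he).le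
  have hwTge : ∀ e ∈ G.edgeSet, w e ≤ wT e := by
    intro e he
    by_cases hs : e ∈ S
    · simp only [hwT]; rw [if_pos hs]; exact (hWgt e he).le
    · simp only [hwT]; rw [if_neg hs]
  -- single-edge estimate
  have hedge : ∀ u v : V, G.Adj u v → spDist G wT u v ≤ wT s(u, v) := by
    intro u v h
    have hp : (Walk.cons h Walk.nil).IsPath := by simp [h.ne]
    have := spDist_le (G := G) (w := wT) hp
    simpa [wlen_cons, wlen_nil] using this
  -- Claim A : unchanged edges already satisfy the metric property w.r.t. wT
  have hA : ∀ u v : V, G.Adj u v → s(u, v) ∉ S → spDist G wT u v = w s(u, v) := by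
    intro u v h hns
    have hle : spDist G wT u v ≤ w s(u, v) := by
      have h1 := hedge u v h
      have h2 : wT s(u, v) = w s(u, v) := by simp only [hwT]; rw [if_neg hns]
      rwa [h2] at h1
    refine le_antisymm hle (le_spDist hconn ?_)
    intro p hp
    by_cases hPS : ∃ f ∈ p.edges, f ∈ S
    · obtain ⟨f, hfp, hfS⟩ := hPS
      have hnn : ∀ x ∈ p.edges.map wT, 0 ≤ x := by
        rintro x hx
        obtain ⟨e, he, rfl⟩ := List.mem_map.mp hx
        exact hwTnn e (p.edges_subset_edgeSet he)
      have h1 : wT f ≤ wlen wT p :=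
        List.single_le_sum hnn _ (List.mem_map_of_mem (f := wT) hfp)
      have h2 : wT f = W := by simp only [hwT]; rw [if_pos hfS]
      have h3 := hWgt s(u, v) (G.mem_edgeSet.mpr h)
      linarith
    · push_neg at hPS
      have hEq : wlen wT p = wlen w p := by
        unfold wlen
        congr 1
        refine List.map_congr_left ?_
        intro f hf
        simp only [hwT]; rw [if_neg (hPS f hf)]
      rw [hEq]
      by_cases he : s(u, v) ∈ p.edges
      · have hnn : ∀ x ∈ p.edges.map w, 0 ≤ x := by
          rintro x hx
          obtain ⟨e, he', rfl⟩ := List.mem_map.mp hx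
          exact (hw e (p.edges_subset_edgeSet he')).le
        exact List.single_le_sum hnn _ (List.mem_map_of_mem (f := w) he)
      · by_contra hlt
        push_neg at hlt
        set c : G.Walk u u := Walk.cons h p.reverse with hc
        have hcyc : c.IsCycle := by
          rw [hc]
          refine (Walk.cons_isCycle_iff p.reverse h).mpr ⟨hp.reverse, ?_⟩
          simpa [Walk.edges_reverse] using he
        have hub : IsUnbalanced w c := by
          refine ⟨s(u, v), by simp [hc], ?_⟩
          have hsum : (c.edges.map w).sum = w s(u, v) + wlen w p := by
            simp [hc, wlen, Walk.edges_reverse, List.sum_reverse]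
          rw [hsum]
          linarith
        obtain ⟨f, hfc, hfS⟩ := hS u c hcyc hub
        have : f = s(u, v) ∨ f ∈ p.edges := by
          simpa [hc, Walk.edges_reverse] using hfc
        rcases this with rfl | hfp
        · exact hns hfS
        · exact hPS f hfp hfS
  -- the new weights
  set w' : Sym2 V → ℝ := fun e =>
    if e ∈ S then Sym2.lift ⟨fun a b => spDist G wT a b, fun a b => spDist_symm wT a b⟩ e
    else w e with hw'
  have hw'S : ∀ u v : V, s(u, v) ∈ S → w' s(u, v) = spDist G wT u v := by
    intro u v hs
    simp only [hw']; rw [if_pos hs, Sym2.lift_mk]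
  have hw'nS : ∀ e, e ∉ S → w' e = w e := by
    intro e hs
    simp only [hw']; rw [if_neg hs]
  have hw'le : ∀ e ∈ G.edgeSet, w' e ≤ wT e := by
    intro e he
    induction e using Sym2.ind with
    | _ a b =>
      by_cases hs : s(a, b) ∈ S
      · rw [hw'S a b hs]
        exact hedge a b (G.mem_edgeSet.mp he)
      · rw [hw'nS _ hs]
        exact hwTge _ he
  have hw'ge : ∀ u v : V, G.Adj u v → spDist G wT u v ≤ w' s(u, v) := by
    intro u v h
    by_cases hs : s(u, v) ∈ S
    · rw [hw'S u v hs]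
    · rw [hw'nS _ hs, ← hA u v h hs]
  have hkey : ∀ (a b : V) (p : G.Walk a b), spDist G wT a b ≤ wlen w' p := by
    intro a b p
    induction p with
    | nil =>
        rw [wlen_nil]
        exact le_trans (spDist_le Walk.IsPath.nil) (le_of_eq wlen_nil)
    | @cons x y z hxy q ih =>
        rw [wlen_cons]
        have h1 : spDist G wT x y ≤ w' s(x, y) := hw'ge x y hxy
        have h2 := spDist_triangle hconn hwTnn x y z
        linarith
  have hd : ∀ a b : V, spDist G w' a b = spDist G wT a b := by
    intro a b
    refine le_antisymm ?_ (le_spDist hconn (fun p _ => hkey a b p))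
    obtain ⟨p, hp, hpl⟩ := exists_spDist (G := G) hconn wT a b
    calc spDist G w' a b ≤ wlen w' p := spDist_le hp
      _ ≤ wlen wT p := wlen_mono p (fun e he => hw'le e (p.edges_subset_edgeSet he))
      _ = spDist G wT a b := hpl
  refine ⟨w', ?_, ?_, ?_⟩
  · intro e he
    induction e using Sym2.ind with
    | _ a b =>
      by_cases hs : s(a, b) ∈ S
      · rw [hw'S a b hs]
        exact spDist_nonneg hconn hwTnn a b
      · rw [hw'nS _ hs]
        exact (hw _ he).le
  · intro e _ hs
    exact hw'nS e hs
  · intro u v h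
    rw [hd u v]
    by_cases hs : s(u, v) ∈ S
    · exact hw'S u v hs
    · rw [hw'nS _ hs]
      exact (hA u v h hs).symm
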